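/- Let G be a group generated by a finite symmetric set S, let G_n ≤ G be a finite-index subgroup with Schreier graph Γ_n = (V_n, E_n) on V_n = G/G_n, and let Z ⊆ 𝕋^{S×G} be the image of the homomorphism Φ : 𝕋^G → 𝕋^{S×G}, Φ((θ_g)_g) = (θ_{sg} − θ_g)_{s∈S,g∈G}. Let P ⊆ G be finite, let C ⊆ G be a finite subset which is connected in the Cayley graph Cay(G, S) and satisfies C ⊇ P ∪ SP, and suppose that for every v ∈ V_n the map C → V_n, g ↦ g·v, is injective and defines a graph isomorphism between the restriction of Cay(G, S) to C and the restriction of Γ_n to C·v. Then for every 𝕋-valued 1-cocycle α ∈ Z^1(Γ_n, 𝕋) and every v ∈ V_n, { (γ(s, g·v))_{s∈S, g∈P} : γ ∈ α + B^1(Γ_n, 𝕋) } = π_P(Z), where π_P : 𝕋^{S×G} → 𝕋^{S×P} is the coordinate projection. -/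
import Mathlib


/-- The sum of the cochain `α : E → 𝕋` around the based loop determined by the word `w` and the
starting vertex `v` of the Schreier graph. -/
noncomputable def graphCocycleSum {G : Type*} [Group G] {H : Subgroup G}
    (α : G → G ⧸ H → UnitAddCircle) : List G → G ⧸ H → UnitAddCircle
  | [], _ => 0
  | s :: w, v => graphCocycleSum α w v + α s (w.prod • v)

/-- `α` is a `𝕋`-valued 1-cocycle on the Schreier graph: it sums to zero around every loop
coming from a relation. -/
def IsGraphCocycle {G : Type*} [Group G] (S : Finset G) {H : Subgroup G}
    (α : G → G ⧸ H → UnitAddCircle) : Prop :=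
  ∀ w : List G, (∀ s ∈ w, s ∈ S) → w.prod = 1 → ∀ v, graphCocycleSum α w v = 0

/-- Reachability inside the subset `C` along (undirected) edges of the Cayley graph
`Cay(G, S)`. -/
inductive CayleyReachIn {G : Type*} [Group G] (S : Finset G) (C : Set G) : G → G → Prop
  | refl (a : G) : CayleyReachIn S C a a
  | step {a b c : G} : CayleyReachIn S C a b → c ∈ C →
      (∃ s ∈ S, c = s * b ∨ b = s * c) → CayleyReachIn S C a c

lemma graphCocycleSum_append {G : Type*} [Group G] {H : Subgroup G}
    (α : G → G ⧸ H → UnitAddCircle) (w₂ w₁ : List G) (v : G ⧸ H) :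
    graphCocycleSum α (w₂ ++ w₁) v =
      graphCocycleSum α w₁ v + graphCocycleSum α w₂ (w₁.prod • v) := by
  induction w₂ with
  | nil => simp [graphCocycleSum]
  | cons s w ih =>
      show graphCocycleSum α (w ++ w₁) v + α s ((w ++ w₁).prod • v) = _
      rw [ih, List.prod_append, mul_smul]
      show _ = graphCocycleSum α w₁ v + (graphCocycleSum α w (w₁.prod • v) + α s (w.prod • w₁.prod • v))
      abel

lemma reach_exists_word {G : Type*} [Group G] {S : Finset G} (hsym : ∀ s ∈ S, s⁻¹ ∈ S)
    {C : Set G} {a b : G} (h : CayleyReachIn S C a b) :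
    ∃ w : List G, (∀ s ∈ w, s ∈ S) ∧ w.prod * a = b := by
  induction h with
  | refl => exact ⟨[], by simp, by simp⟩
  | step _ _ hs ih =>
      obtain ⟨w, hw, hwp⟩ := ih
      obtain ⟨s, hsS, hcase⟩ := hs
      rcases hcase with h1 | h2
      · refine ⟨s :: w, ?_, ?_⟩
        · intro t ht
          rcases List.mem_cons.mp ht with rfl | ht
          · exact hsS
          · exact hw t ht
        · rw [List.prod_cons, mul_assoc, hwp, ← h1]
      · refine ⟨s⁻¹ :: w, ?_, ?_⟩
        · intro t ht
          rcases List.mem_cons.mp ht with rfl | ht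
          · exact hsym s hsS
          · exact hw t ht
        · rw [List.prod_cons, mul_assoc, hwp, h2, inv_mul_cancel_left]

lemma gcs_eq_of_prod_eq {G : Type*} [Group G] {S : Finset G} {H : Subgroup G}
    {α : G → G ⧸ H → UnitAddCircle}
    (hsym : ∀ s ∈ S, s⁻¹ ∈ S) (hα : IsGraphCocycle S α) {w₁ w₂ : List G}
    (h₁ : ∀ s ∈ w₁, s ∈ S) (h₂ : ∀ s ∈ w₂, s ∈ S) (hp : w₁.prod = w₂.prod)
    (v : G ⧸ H) :
    graphCocycleSum α w₁ v = graphCocycleSum α w₂ v := by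
  set wi : List G := (w₂.map fun x => x⁻¹).reverse with hwi
  have hwiS : ∀ s ∈ wi, s ∈ S := by
    intro s hs
    rw [hwi, List.mem_reverse, List.mem_map] at hs
    obtain ⟨t, ht, rfl⟩ := hs
    exact hsym t (h₂ t ht)
  have hwip : wi.prod = w₂.prod⁻¹ := (List.prod_inv_reverse w₂).symm
  have hz1 : graphCocycleSum α (wi ++ w₁) v = 0 := by
    refine hα _ ?_ ?_ v
    · intro s hs
      rcases List.mem_append.mp hs with h | h
      · exact hwiS s h
      · exact h₁ s h
    · rw [List.prod_append, hwip, hp, inv_mul_cancel]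
  have hz2 : graphCocycleSum α (wi ++ w₂) v = 0 := by
    refine hα _ ?_ ?_ v
    · intro s hs
      rcases List.mem_append.mp hs with h | h
      · exact hwiS s h
      · exact h₂ s h
    · rw [List.prod_append, hwip, inv_mul_cancel]
  have e1 := graphCocycleSum_append α wi w₁ v
  have e2 := graphCocycleSum_append α wi w₂ v
  rw [hz1] at e1
  rw [hz2] at e2
  rw [hp] at e1
  exact add_right_cancel (e1.symm.trans e2)

/-- **Lemma (cosets of coboundaries project onto the Popa subgroup).**
Let `Z ≤ 𝕋^{S×G}` be the image of `Φ(θ) = (θ_{sg} − θ_g)_{s,g}`, let `P ⊆ G` be finite, let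
`C ⊇ P ∪ SP` be finite and connected in `Cay(G, S)`, and suppose `g ↦ g·v` is a graph
isomorphism from `Cay(G, S)|_C` onto `Γ|_{C·v}`.  Then, for every 1-cocycle `α` on the Schreier
graph and every vertex `v`, the projections to the edges emanating from `P·v` of the coset
`α + B¹(Γ, 𝕋)` form exactly `π_P(Z)`. -/
theorem coset_projection_eq_popa {G : Type*} [Group G] (S : Finset G)
    (hsym : ∀ s ∈ S, s⁻¹ ∈ S) (hgen : Subgroup.closure (S : Set G) = ⊤)
    (H : Subgroup G) (hHfin : H.FiniteIndex)
    (P : Finset G) (C : Finset G)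
    (hPC : ∀ g ∈ P, g ∈ C) (hSPC : ∀ s ∈ S, ∀ g ∈ P, s * g ∈ C)
    (hconn : ∀ a ∈ C, ∀ b ∈ C, CayleyReachIn S (↑C) a b)
    (v : G ⧸ H)
    (hinj : Set.InjOn (fun g : G => g • v) ↑C)
    (hedge : ∀ a ∈ C, ∀ b ∈ C, ∀ s ∈ S, b • v = (s * a) • v → b = s * a)
    (α : G → G ⧸ H → UnitAddCircle) (hα : IsGraphCocycle S α) :
    {z : (↥S × ↥P) → UnitAddCircle |
        ∃ γ : G → G ⧸ H → UnitAddCircle,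
          (∃ β : G ⧸ H → UnitAddCircle,
            ∀ s ∈ S, ∀ u : G ⧸ H, γ s u = α s u + (β (s • u) - β u)) ∧
          z = fun p => γ (p.1 : G) ((p.2 : G) • v)} =
      {z : (↥S × ↥P) → UnitAddCircle |
        ∃ θ : G → UnitAddCircle, z = fun p => θ ((p.1 : G) * (p.2 : G)) - θ (p.2 : G)} := by
  classical
  ext z
  simp only [Set.mem_setOf_eq]
  by_cases hPne : P.Nonempty
  swap
  · -- `P` is empty: both sides contain every `z` vacuously.
    have hPempty : IsEmpty ↥P := by
      refine ⟨fun p => ?_⟩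
      exact hPne ⟨p.1, p.2⟩
    constructor
    · rintro -
      exact ⟨0, funext fun p => (hPempty.false p.2).elim⟩
    · rintro -
      exact ⟨α, ⟨0, fun s _ u => by simp⟩, funext fun p => (hPempty.false p.2).elim⟩
  · obtain ⟨a₀, hp₀⟩ := hPne
    have ha₀ : a₀ ∈ C := hPC a₀ hp₀
    have hreach : ∀ c ∈ C, ∃ w : List G, (∀ s ∈ w, s ∈ S) ∧ w.prod * a₀ = c :=
      fun c hc => reach_exists_word hsym (hconn a₀ ha₀ c hc)
    set F : G → UnitAddCircle := fun c =>
      if h : ∃ w : List G, (∀ s ∈ w, s ∈ S) ∧ w.prod * a₀ = c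
      then graphCocycleSum α h.choose (a₀ • v) else 0 with hFdef
    have hFval : ∀ c ∈ C, ∀ w : List G, (∀ s ∈ w, s ∈ S) → w.prod * a₀ = c →
        F c = graphCocycleSum α w (a₀ • v) := by
      intro c hc w hwS hwp
      have hex := hreach c hc
      rw [hFdef]
      simp only [dif_pos hex]
      refine gcs_eq_of_prod_eq hsym hα hex.choose_spec.1 hwS ?_ (a₀ • v)
      exact mul_right_cancel (hex.choose_spec.2.trans hwp.symm)
    have hF : ∀ g ∈ C, ∀ s ∈ S, s * g ∈ C → F (s * g) = F g + α s (g • v) := by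
      intro g hg s hs hsg
      obtain ⟨w, hwS, hwp⟩ := hreach g hg
      have h1 : F g = graphCocycleSum α w (a₀ • v) := hFval g hg w hwS hwp
      have h2 : F (s * g) = graphCocycleSum α (s :: w) (a₀ • v) := by
        refine hFval (s * g) hsg (s :: w) ?_ ?_
        · intro t ht
          rcases List.mem_cons.mp ht with rfl | ht
          · exact hs
          · exact hwS t ht
        · rw [List.prod_cons, mul_assoc, hwp]
      rw [h1, h2]
      show graphCocycleSum α w (a₀ • v) + α s (w.prod • a₀ • v) = _
      rw [← mul_smul, hwp]
    constructor
    · rintro ⟨γ, ⟨β, hβ⟩, rfl⟩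
      refine ⟨fun g => F g + β (g • v), ?_⟩
      funext p
      obtain ⟨⟨s, hs⟩, ⟨g, hg⟩⟩ := p
      simp only
      rw [hβ s hs (g • v), hF g (hPC g hg) s hs (hSPC s hs g hg), mul_smul]
      abel
    · rintro ⟨θ, rfl⟩
      set β : G ⧸ H → UnitAddCircle := fun u =>
        if h : ∃ c, c ∈ C ∧ c • v = u then θ h.choose - F h.choose else 0 with hβdef
      have hβval : ∀ c ∈ C, β (c • v) = θ c - F c := by
        intro c hc
        have hex : ∃ c', c' ∈ C ∧ c' • v = c • v := ⟨c, hc, rfl⟩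
        rw [hβdef]
        simp only [dif_pos hex]
        have hccc : hex.choose = c :=
          hinj (Finset.mem_coe.mpr hex.choose_spec.1) (Finset.mem_coe.mpr hc)
            hex.choose_spec.2
        rw [hccc]
      refine ⟨fun s u => α s u + (β (s • u) - β u), ⟨β, fun s _ u => rfl⟩, ?_⟩
      funext p
      obtain ⟨⟨s, hs⟩, ⟨g, hg⟩⟩ := p
      simp only
      have hgC := hPC g hg
      have hsgC := hSPC s hs g hg
      rw [← mul_smul, hβval _ hsgC, hβval _ hgC, hF g hgC s hs hsgC]
      abel
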